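/- The families {j_n}_{n≥1} and {S_n}_{n≥1}, where S_n := −j_n'/n = q^{−n} + Σ_{m≥1} b_n(m) q^m, are Zagier dual: c_m(n) = −b_n(m) for all integers n, m ≥ 1. -/

import Mathlib

noncomputable section

open Complex Matrix

/-! ## General notation -/

/-- `e(x) = exp(2πix)`. -/
def eC (x : ℂ) : ℂ := Complex.exp (2 * Real.pi * Complex.I * x)

/-- A fundamental discriminant: either `D ≡ 1 (mod 4)` and squarefree, or `D = 4m` with
`m ≡ 2, 3 (mod 4)` squarefree. -/
def IsFundamentalDiscriminant (D : ℤ) : Prop :=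
  (D % 4 = 1 ∧ Squarefree D) ∨
    (D % 4 = 0 ∧ Squarefree (D / 4) ∧ ((D / 4) % 4 = 2 ∨ (D / 4) % 4 = 3))

/-- `√D = i·√|D|` for a negative discriminant `D`, as a complex number. -/
def sqrtD (D : ℤ) : ℂ := Complex.I * Real.sqrt D.natAbs

/-- `ω_D = (D + √D)/2`, a generator of the ring of integers of `ℚ(√D)`. -/
def omegaD (D : ℤ) : ℂ := ((D : ℂ) + sqrtD D) / 2

/-- The ring of integers `O_D = ℤ[(D+√D)/2]` of `ℚ(√D)`, realized as a subring of `ℂ`. -/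
def OD (D : ℤ) : Subring ℂ := Subring.closure {omegaD D}

/-- The inverse different `𝔡_D⁻¹ = (1/√D)·O_D` of `ℚ(√D)`, as a subset of `ℂ`. -/
def invDiff (D : ℤ) : Set ℂ := {ν | ν * sqrtD D ∈ OD D}

/-- The trace `ν ↦ ν + ν̄` of `ℚ(√D)/ℚ`, extended to `ℂ`. -/
def trQ (ν : ℂ) : ℂ := ν + (starRingEnd ℂ) ν

abbrev SL2 (R : Type*) [CommRing R] := Matrix.SpecialLinearGroup (Fin 2) R

/-- The inclusion `SL₂(O_D) → M₂(ℂ)`. -/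
def toSL2C {D : ℤ} (g : SL2 (OD D)) : Matrix (Fin 2) (Fin 2) ℂ :=
  fun i j => (g.1 i j : ℂ)

/-- The action of `2×2` complex matrices on hyperbolic 3-space `H³ = {z + rj}`,
a point being encoded as the pair `P = (z, r) : ℂ × ℝ`:
`γ(z+rj) = ((az+b)(cz+d)^* + a c̄ r²)/(|cz+d|² + |c|²r²) + (r/(|cz+d|² + |c|²r²)) j`. -/
def actH3 (g : Matrix (Fin 2) (Fin 2) ℂ) (P : ℂ × ℝ) : ℂ × ℝ :=
  (((g 0 0 * P.1 + g 0 1) * (starRingEnd ℂ) (g 1 0 * P.1 + g 1 1)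
      + g 0 0 * (starRingEnd ℂ) (g 1 0) * ((P.2 ^ 2 : ℝ) : ℂ)) /
      ((Complex.normSq (g 1 0 * P.1 + g 1 1) + Complex.normSq (g 1 0) * P.2 ^ 2 : ℝ) : ℂ),
    P.2 / (Complex.normSq (g 1 0 * P.1 + g 1 1) + Complex.normSq (g 1 0) * P.2 ^ 2))

/-- The subgroup `Γ_∞ = {±(1 β; 0 1) : β ∈ O_D}` of `SL₂(O_D)`. -/
def GammaInf (D : ℤ) : Subgroup (SL2 (OD D)) where
  carrier := {g | g.1 1 0 = 0 ∧ g.1 0 0 = g.1 1 1}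
  one_mem' := by constructor <;> simp
  mul_mem' := by
    rintro a b ⟨ha1, ha2⟩ ⟨hb1, hb2⟩
    constructor <;>
      simp only [Matrix.SpecialLinearGroup.coe_mul, Matrix.mul_apply, Fin.sum_univ_two,
        ha1, hb1, ha2, hb2] <;> ring
  inv_mem' := by
    rintro a ⟨ha1, ha2⟩
    rw [Matrix.SpecialLinearGroup.SL2_inv_expl]
    constructor <;> simp [ha1, ha2]

/-! ## Bessel functions -/

/-- The modified Bessel function of the first kind `I_s(y)`, via its power series. -/
def besselI (s : ℂ) (y : ℝ) : ℂ :=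
  ∑' k : ℕ, ((y : ℂ) / 2) ^ (s + 2 * k) / ((k.factorial : ℂ) * Complex.Gamma (s + k + 1))

/-- The Bessel function of the first kind `J_s(y)`, via its power series. -/
def besselJ (s : ℂ) (y : ℝ) : ℂ :=
  ∑' k : ℕ, (-1) ^ k * ((y : ℂ) / 2) ^ (s + 2 * k) / ((k.factorial : ℂ) * Complex.Gamma (s + k + 1))

/-- The K-Bessel function `K_s(y)`, via its integral representation
`K_s(y) = ∫_0^∞ exp(-y cosh t) cosh(st) dt`. -/
def besselK (s : ℂ) (y : ℝ) : ℂ :=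
  ∫ t in Set.Ioi (0 : ℝ), Complex.exp (-(y : ℂ) * Real.cosh t) * Complex.cosh (s * t)

/-! ## Automorphic functions on hyperbolic 3-space -/

/-- The space of right cosets `Γ_∞ \ Γ` for `Γ = SL₂(O_D)` (which equals `Γ_∞ \ Γ` for
`Γ = PSL₂(O_D)` since `-1 ∈ Γ_∞`). -/
abbrev cosetInf (D : ℤ) := Quotient (QuotientGroup.rightRel (GammaInf D))

/-- The Niebur Poincaré series
`F_ν(P, s) = 2π|ν| Σ_{γ ∈ Γ_∞\Γ} r(γP) I_s(4π|ν| r(γP)) e(tr(ν z(γP)))`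
on hyperbolic 3-space, convergent for `Re(s) > 1`. -/
def nieburH3 (D : ℤ) (ν : ℂ) (P : ℂ × ℝ) (s : ℂ) : ℂ :=
  ((2 * Real.pi * ‖ν‖ : ℝ) : ℂ) *
    ∑' γ : cosetInf D,
      (((actH3 (toSL2C γ.out) P).2 : ℝ) : ℂ)
        * besselI s (4 * Real.pi * ‖ν‖ * (actH3 (toSL2C γ.out) P).2)
        * eC (trQ (ν * (actH3 (toSL2C γ.out) P).1))

/-- The weight `0` real-analytic Eisenstein series `E₀(P,s) = Σ_{γ ∈ Γ_∞\Γ} r(γP)^{s+1}`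
on hyperbolic 3-space, convergent for `Re(s) > 1`. -/
def eisH3 (D : ℤ) (P : ℂ × ℝ) (s : ℂ) : ℂ :=
  ∑' γ : cosetInf D, (((actH3 (toSL2C γ.out) P).2 : ℝ) : ℂ) ^ (s + 1)

/-- `F : ℂ → (ℂ × ℝ) → ℂ → ℂ`, `(ν, P, s) ↦ F_ν(P,s)`, is the family of analytically continued
Niebur Poincaré series on `H³`: for each `ν ∈ 𝔡_D⁻¹`, `ν ≠ 0`, and each `P ∈ H³`, the function
`s ↦ F_ν(P, s)` is holomorphic on `Re(s) > 1/2` and agrees with the Poincaré series for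
`Re(s) > 1`.  The harmonic function `J_ν` is then `J_ν(P) = F_ν(P, 1)`. -/
def IsNieburFamilyH3 (D : ℤ) (F : ℂ → (ℂ × ℝ) → ℂ → ℂ) : Prop :=
  ∀ ν ∈ invDiff D, ν ≠ 0 → ∀ P : ℂ × ℝ, 0 < P.2 →
    DifferentiableOn ℂ (F ν P) {s : ℂ | 1 / 2 < s.re} ∧
      ∀ s : ℂ, 1 < s.re → F ν P s = nieburH3 D ν P s

/-! ## Kronecker symbols and the twisting function -/

/-- The Kronecker symbol `(a/2)`. -/
def kron2 (a : ℤ) : ℤ :=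
  if a % 2 = 0 then 0 else if a % 8 = 1 ∨ a % 8 = 7 then 1 else -1

/-- The Kronecker symbol `(a/n)` for a positive integer `n`. -/
def kronecker (a : ℤ) (n : ℕ) : ℤ :=
  kron2 a ^ (n.factorization 2) * jacobiSym a (n / 2 ^ (n.factorization 2))

/-- The prime discriminant `p*` attached to a prime `p` dividing the fundamental
discriminant `D`, so that `D = ∏_{p ∣ D} p*`: for odd `p` one has `p* = (-1/p)·p`, and
`2*` is `D` divided by the product of the odd prime discriminants dividing `D`. -/
def primeDisc (D : ℤ) (p : ℕ) : ℤ :=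
  if p = 2 then
    D / ∏ q ∈ D.natAbs.primeFactors.erase 2, (if q % 4 = 1 then (q : ℤ) else -(q : ℤ))
  else if p % 4 = 1 then (p : ℤ) else -(p : ℤ)

/-- `D_c`: the fundamental discriminant dividing `D` which is the product of the prime
discriminants `p*` over the primes `p` dividing `gcd(c, D)`. -/
def Dc (D : ℤ) (c : ℕ) : ℤ :=
  ∏ p ∈ D.natAbs.primeFactors.filter (· ∣ c), primeDisc D p

/-- The norm `|x + y·ω_D|²`, as an integer. -/
def normInt (D : ℤ) (x y : ℤ) : ℤ := x ^ 2 + D * x * y + (D ^ 2 - D) / 4 * y ^ 2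

/-- A positive definite integral binary hermitian form `X = (a b; b̄ c)` of determinant
`det X = ac - |b|² = N` over `ℚ(√D)`, i.e. an element of `L⁺_N`. -/
structure HermForm (D : ℤ) (N : ℤ) where
  a : ℤ
  b : ℂ
  c : ℤ
  ha : 0 < a
  hc : 0 < c
  hb : b ∈ OD D
  hdet : (a : ℝ) * c - Complex.normSq b = N

/-- The `2×2` complex matrix `(a b; b̄ c)` of a hermitian form. -/
def matOf {D N : ℤ} (X : HermForm D N) : Matrix (Fin 2) (Fin 2) ℂ :=
  !![(X.a : ℂ), X.b; (starRingEnd ℂ) X.b, (X.c : ℂ)]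

open Classical in
/-- The factor `χ_{p*}` of the twisting function, evaluated on a form with diagonal
entries `a`, `c`: it is `(p*/a)` if `p ∤ a`, `(p*/c)` if `p ∤ c`, and `0` if `p ∣ gcd(a,c)`. -/
def chiP (D : ℤ) (p : ℕ) (a c : ℤ) : ℤ :=
  if ¬ (p : ℤ) ∣ a then kronecker (primeDisc D p) a.natAbs
  else if ¬ (p : ℤ) ∣ c then kronecker (primeDisc D p) c.natAbs
  else 0

/-- The twisting function `χ_D(X) = ∏_{p ∣ D} χ_{p*}(X)`. -/
def chiD {N : ℤ} (D : ℤ) (X : HermForm D N) : ℤ :=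
  ∏ p ∈ D.natAbs.primeFactors, chiP D p X.a X.c

/-- Two hermitian forms are equivalent if they lie in the same `Γ = PSL₂(O_D)`-orbit, where
`γ` acts by `X ↦ γXγ*`. -/
def hermRel (D N : ℤ) (X Y : HermForm D N) : Prop :=
  ∃ g : SL2 (OD D), matOf Y = toSL2C g * matOf X * (toSL2C g).conjTranspose

/-- The (finite) orbit space `Γ \ L⁺_N`. -/
abbrev hermOrbits (D N : ℤ) := Quot (hermRel D N)

/-- The order `|Γ_X|` of the stabilizer of the form `X` in `Γ = PSL₂(O_D)`, i.e. half the
order of its stabilizer in `SL₂(O_D)`. -/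
def stabOrder {D N : ℤ} (X : HermForm D N) : ℕ :=
  Nat.card {g : SL2 (OD D) // toSL2C g * matOf X * (toSL2C g).conjTranspose = matOf X} / 2

/-- The special point `P_X = b/c + (√N/c)·j ∈ H³` attached to a hermitian form `X` of
determinant `N`. -/
def specialPt {D : ℤ} (N : ℤ) (X : HermForm D N) : ℂ × ℝ :=
  (X.b / (X.c : ℂ), Real.sqrt (N : ℝ) / (X.c : ℝ))

/-- The `m`-th twisted trace `tr_{m,D}(f) = Σ_{X ∈ Γ\L⁺_{|D|m}} (χ_D(X)/|Γ_X|)·f(P_X)` of a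
`Γ`-invariant function `f` on `H³`. -/
def twTrace (D : ℤ) (m : ℤ) (f : ℂ × ℝ → ℂ) : ℂ :=
  ∑' q : hermOrbits D (|D| * m),
    ((chiD D q.out : ℤ) : ℂ) / (stabOrder q.out : ℂ) * f (specialPt (|D| * m) q.out)

/-- The natural number `|D|·|ν|²` attached to `ν ∈ 𝔡_D⁻¹`. -/
def nIdx (D : ℤ) (ν : ℂ) : ℕ := ⌊(D.natAbs : ℝ) * Complex.normSq ν⌋₊

/-! ## Kloosterman and exponential sums -/

/-- The Kloosterman sum `H_c(m, n) = (1/c) Σ_{d ∈ (ℤ/c)ˣ} e((nd - md')/c)`. -/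
def kloosterman (c : ℕ) (m n : ℤ) : ℂ :=
  if h : c = 0 then 0 else
    haveI : NeZero c := ⟨h⟩
    (c : ℂ)⁻¹ * ∑ d : (ZMod c)ˣ,
      eC (((n * ((d : ZMod c).val : ℤ) - m * (((d⁻¹ : (ZMod c)ˣ) : ZMod c).val : ℤ) : ℤ) : ℂ) / c)

open Classical in
/-- The exponential sum
`G̃_c(N, ν) = (D/D_c | c) Σ_{b ∈ O_D/cO_D, |b|² ≡ -N (c)} (D_c | (N + |b|²)/c) e(tr(νb)/c)`,
the sum running over representatives `b = x + yω_D` with `0 ≤ x, y < c`. -/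
def Gtilde (D : ℤ) (c : ℕ) (N : ℤ) (ν : ℂ) : ℂ :=
  (kronecker (D / Dc D c) c : ℂ) *
    ∑ p ∈ Finset.range c ×ˢ Finset.range c,
      if (c : ℤ) ∣ (normInt D p.1 p.2 + N) then
        (kronecker (Dc D c) (((N + normInt D p.1 p.2) / c).toNat) : ℂ) *
          eC (trQ (ν * ((p.1 : ℂ) + (p.2 : ℂ) * omegaD D)) / c)
      else 0

/-! ## The elliptic side: Niebur Poincaré series for `PSL₂(ℤ)` -/

/-- The subgroup `Γ'_∞ = {±(1 b; 0 1) : b ∈ ℤ}` of `SL₂(ℤ)`. -/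
def GammaInfZ : Subgroup (SL2 ℤ) where
  carrier := {g | g.1 1 0 = 0 ∧ g.1 0 0 = g.1 1 1}
  one_mem' := by constructor <;> simp
  mul_mem' := by
    rintro a b ⟨ha1, ha2⟩ ⟨hb1, hb2⟩
    constructor <;>
      simp only [Matrix.SpecialLinearGroup.coe_mul, Matrix.mul_apply, Fin.sum_univ_two,
        ha1, hb1, ha2, hb2] <;> ring
  inv_mem' := by
    rintro a ⟨ha1, ha2⟩
    rw [Matrix.SpecialLinearGroup.SL2_inv_expl]
    constructor <;> simp [ha1, ha2]

/-- The space of right cosets `Γ'_∞ \ Γ'` for `Γ' = SL₂(ℤ)`. -/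
abbrev cosetInfZ := Quotient (QuotientGroup.rightRel GammaInfZ)

/-- The Möbius action of `SL₂(ℤ)` on the upper half-plane (as a subset of `ℂ`). -/
def smulZ (g : SL2 ℤ) (τ : ℂ) : ℂ :=
  ((g.1 0 0 : ℂ) * τ + (g.1 0 1 : ℂ)) / ((g.1 1 0 : ℂ) * τ + (g.1 1 1 : ℂ))

/-- The Niebur Poincaré series
`F_n(τ, s) = π√n Σ_{M ∈ Γ'_∞\Γ'} (√v I_{s-1/2}(2πnv) e(-nu))|₀ M` for `PSL₂(ℤ)`,
convergent for `Re(s) > 1`. -/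
def nieburZ (n : ℕ) (τ : ℂ) (s : ℂ) : ℂ :=
  ((Real.pi * Real.sqrt n : ℝ) : ℂ) *
    ∑' γ : cosetInfZ,
      ((Real.sqrt (smulZ γ.out τ).im : ℝ) : ℂ)
        * besselI (s - 1 / 2) (2 * Real.pi * n * (smulZ γ.out τ).im)
        * eC (-(n : ℂ) * ((smulZ γ.out τ).re : ℂ))

/-- `𝓘_s(y) = √(π|y|/2)·I_{s-1/2}(|y|)`. -/
def scriptI (s : ℂ) (y : ℝ) : ℂ :=
  ((Real.sqrt (Real.pi * |y| / 2) : ℝ) : ℂ) * besselI (s - 1 / 2) |y|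

/-- `𝓚_s(y) = √(2|y|/π)·K_{s-1/2}(|y|)`. -/
def scriptK (s : ℂ) (y : ℝ) : ℂ :=
  ((Real.sqrt (2 * |y| / Real.pi) : ℝ) : ℂ) * besselK (s - 1 / 2) |y|

open Classical in
/-- The Fourier coefficients `c_n(m, s)` of the Niebur Poincaré series `F_n(τ, s)` for
`PSL₂(ℤ)`, given by series of Kloosterman sums and Bessel functions. -/
def cCoef (n : ℕ) (m : ℤ) (s : ℂ) : ℂ :=
  if 0 < m then
    ((2 * Real.pi * Real.sqrt ((n : ℝ) / |(m : ℝ)|) : ℝ) : ℂ) *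
      ∑' c : ℕ, kloosterman (c + 1) m n *
        besselI (2 * s - 1) (4 * Real.pi * Real.sqrt ((m.natAbs * n : ℕ) : ℝ) / (c + 1))
  else if m = 0 then
    4 * (Real.pi : ℂ) ^ ((1 : ℂ) + s) * (n : ℂ) ^ (s : ℂ) / ((2 * s - 1) * Complex.Gamma s) *
      ∑' c : ℕ, ((c + 1 : ℕ) : ℂ) ^ (1 - 2 * s) * kloosterman (c + 1) n 0
  else
    -(if m = -(n : ℤ) then 1 else 0) +
      ((2 * Real.pi * Real.sqrt ((n : ℝ) / |(m : ℝ)|) : ℝ) : ℂ) *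
        ∑' c : ℕ, kloosterman (c + 1) m n *
          besselJ (2 * s - 1) (4 * Real.pi * Real.sqrt ((m.natAbs * n : ℕ) : ℝ) / (c + 1))

/-- The family `{j_n}_{n ≥ 1}` of weakly holomorphic modular functions for `PSL₂(ℤ)` with
Fourier expansions `j_n(τ) = q^{-n} + Σ_{m ≥ 1} c_n(m) q^m`: each `j n` is holomorphic on the
upper half-plane, `SL₂(ℤ)`-invariant, and has the stated Fourier expansion with
coefficients `c n`. -/
def IsJFamily (c : ℕ → ℕ → ℂ) (j : ℕ → ℂ → ℂ) : Prop :=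
  ∀ n : ℕ, 1 ≤ n →
    (∀ τ : ℂ, 0 < τ.im → DifferentiableAt ℂ (j n) τ) ∧
      (∀ g : SL2 ℤ, ∀ τ : ℂ, 0 < τ.im → j n (smulZ g τ) = j n τ) ∧
        ∀ τ : ℂ, 0 < τ.im →
          j n τ = eC (-(n : ℂ) * τ) + ∑' m : ℕ, c n (m + 1) * eC (((m + 1 : ℕ) : ℂ) * τ)

/-- The divisor sum `σ_s(m) = Σ_{d ∣ m} d^s` with complex exponent. -/
def sigmaC (s : ℂ) (m : ℕ) : ℂ := ∑ d ∈ m.divisors, (d : ℂ) ^ s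

/-- The divisor sum `σ₁(n)`. -/
def sigma1 (n : ℕ) : ℕ := ∑ d ∈ n.divisors, d

/-- The Dirichlet L-series `L_D(s) = Σ_{n ≥ 1} (D/n)·n^{-s}`. -/
def LDir (D : ℤ) (s : ℂ) : ℂ := ∑' n : ℕ, (kronecker D (n + 1) : ℂ) / ((n + 1 : ℕ) : ℂ) ^ s

/-! ## Class numbers -/

/-- The imaginary quadratic field `ℚ(√D) ⊆ ℂ`. -/
def QK (D : ℤ) : IntermediateField ℚ ℂ := IntermediateField.adjoin ℚ {sqrtD D}

/-- The class number `h(D)` of `ℚ(√D)`. -/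
def classNum (D : ℤ) : ℕ := Nat.card (ClassGroup (NumberField.RingOfIntegers (QK D)))

/-- `w(D)`: half the number of units of `O_D`. -/
def halfUnits (D : ℤ) : ℕ := Nat.card (NumberField.RingOfIntegers (QK D))ˣ / 2

/-! ## Green's function and differential operators on `H³` -/

/-- `cosh d(P,Q)` for the hyperbolic distance `d` on `H³`. -/
def coshDist (P Q : ℂ × ℝ) : ℝ :=
  (Complex.normSq (P.1 - Q.1) + P.2 ^ 2 + Q.2 ^ 2) / (2 * P.2 * Q.2)

/-- `φ_s(t) = (t + √(t²-1))^{-s} (t²-1)^{-1/2}`. -/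
def phiGreen (s : ℂ) (t : ℝ) : ℂ :=
  ((t + Real.sqrt (t ^ 2 - 1) : ℝ) : ℂ) ^ (-s) * (((Real.sqrt (t ^ 2 - 1) : ℝ) : ℂ))⁻¹

/-- The quotient `PSL₂(O_D) = SL₂(O_D)/{±1}`, realized as a coset space. -/
abbrev PSLcosets (D : ℤ) :=
  Quotient (QuotientGroup.rightRel (Subgroup.zpowers (-1 : SL2 (OD D))))

/-- The automorphic Green's function `G_s(P₁,P₂) = π Σ_{γ ∈ PSL₂(O_D)} φ_s(cosh d(P₁, γP₂))`. -/
def greenFn (D : ℤ) (s : ℂ) (P Q : ℂ × ℝ) : ℂ :=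
  (Real.pi : ℂ) * ∑' γ : PSLcosets D, phiGreen s (coshDist P (actH3 (toSL2C γ.out) Q))

/-- Directional derivative of a function on `ℂ × ℝ`. -/
def dDir (f : ℂ × ℝ → ℂ) (w : ℂ × ℝ) (P : ℂ × ℝ) : ℂ := fderiv ℝ f P w

/-- The hyperbolic Laplacian `Δ = -r²(∂²_x + ∂²_y + ∂²_r) + r ∂_r` on `H³`, applied at a
point `P = (z, r)`. -/
def hypLaplacian (f : ℂ × ℝ → ℂ) (P : ℂ × ℝ) : ℂ :=
  -((P.2 : ℂ) ^ 2) * (dDir (dDir f (1, 0)) (1, 0) P + dDir (dDir f (Complex.I, 0)) (Complex.I, 0) P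
      + dDir (dDir f (0, 1)) (0, 1) P)
    + (P.2 : ℂ) * dDir f (0, 1) P

/-! ## Weight 2 automorphic forms on `H³` -/

/-- The factor of automorphy of weight `2` (symmetric square) for the group `SL₂(ℂ)` acting
on `H³`: for `γ = (a b; c d)` and `P = z + rj`, with `u = cz + d` and `v = cr`, this is the
`3×3` matrix implementing the symmetric square of `(u -v; v̄ ū)`, normalized so that a vector
`(-∂_z L, ∂_r L, ∂_{z̄} L)ᵗ` built from a `Γ`-invariant function `L` transforms by it. -/
def autFac2 (g : Matrix (Fin 2) (Fin 2) ℂ) (P : ℂ × ℝ) : Matrix (Fin 3) (Fin 3) ℂ :=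
  let u : ℂ := g 1 0 * P.1 + g 1 1
  let v : ℂ := g 1 0 * (P.2 : ℂ)
  let ub : ℂ := (starRingEnd ℂ) u
  let vb : ℂ := (starRingEnd ℂ) v
  !![u ^ 2, -(u * v), v ^ 2;
     2 * u * vb, u * ub - v * vb, -(2 * ub * v);
     vb ^ 2, ub * vb, ub ^ 2]

/-- The special functions `K̃_ℓ`: `K̃₂ = -K₁`, `K̃₁ = 2iK₀`, `K̃₀ = K₁`. -/
def Ktilde (ℓ : ℕ) (y : ℝ) : ℂ :=
  if ℓ = 2 then -besselK 1 y else if ℓ = 1 then 2 * Complex.I * besselK 0 y else besselK 1 y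

/-- The set `T_{m,D}` of special points attached to forms `X ∈ L⁺_{|D|m}` with
`χ_D(X) ≠ 0`. -/
def Tset (D m : ℤ) : Set (ℂ × ℝ) :=
  {P | ∃ X : HermForm D (|D| * m), chiD D X ≠ 0 ∧ P = specialPt (|D| * m) X}



namespace ZagierAux

open MeasureTheory intervalIntegral


lemma isOpenH : IsOpen {z : ℂ | 0 < z.im} := isOpen_lt continuous_const Complex.continuous_im

lemma eC_add (x y : ℂ) : eC (x + y) = eC x * eC y := by
  rw [eC, eC, eC, ← Complex.exp_add]; ring_nf

lemma eC_pow (k : ℕ) (τ : ℂ) : eC ((k : ℂ) * τ) = eC τ ^ k := by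
  rw [eC, eC, show 2 * (Real.pi : ℂ) * Complex.I * ((k : ℂ) * τ)
    = (k : ℕ) * (2 * (Real.pi : ℂ) * Complex.I * τ) by push_cast; ring, Complex.exp_nat_mul]

lemma abs_eC (x : ℂ) : ‖eC x‖ = Real.exp (-(2 * Real.pi * x.im)) := by
  rw [eC, Complex.norm_exp]
  congr 1
  simp [Complex.mul_re, Complex.mul_im]

lemma integral_eC (d : ℤ) (τ0 : ℂ) :
    (∫ t in (0:ℝ)..1, eC ((d : ℂ) * (τ0 + (t : ℂ)))) = if d = 0 then 1 else 0 := by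
  have hrw : ∀ t : ℝ, eC ((d : ℂ) * (τ0 + (t : ℂ)))
      = eC ((d : ℂ) * τ0) * Complex.exp ((2 * (Real.pi : ℂ) * Complex.I * d) * (t : ℂ)) := by
    intro t
    rw [eC, eC, ← Complex.exp_add]
    ring_nf
  simp only [hrw]
  rw [intervalIntegral.integral_const_mul]
  by_cases hd : d = 0
  · subst hd
    simp [eC]
  · have hc : (2 * (Real.pi : ℂ) * Complex.I * d) ≠ 0 := by
      simp [Real.pi_ne_zero, Complex.I_ne_zero, hd]
    rw [integral_exp_mul_complex hc]
    rw [if_neg hd]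
    have h1 : Complex.exp (2 * (Real.pi : ℂ) * Complex.I * d * ((1:ℝ) : ℂ)) = 1 := by
      rw [Complex.ofReal_one, mul_one,
        show 2 * (Real.pi : ℂ) * Complex.I * d = (d : ℤ) * (2 * Real.pi * Complex.I) by push_cast; ring]
      exact Complex.exp_int_mul_two_pi_mul_I d
    rw [h1]
    simp

lemma summable_norm_shift {a : ℕ → ℂ} {q : ℂ} {r : ℝ}
    (h : Summable fun k : ℕ => a (k + 1) * q ^ (k + 1)) (hr : 0 ≤ r)
    (hq : r < ‖q‖) :
    Summable fun k : ℕ => ‖a (k + 1)‖ * r ^ (k + 1) := by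
  have hq0 : (0:ℝ) < ‖q‖ := lt_of_le_of_lt hr hq
  obtain ⟨M, hM⟩ : ∃ M : ℝ, ∀ k : ℕ, ‖a (k + 1) * q ^ (k + 1)‖ ≤ M := by
    have h0 := h.tendsto_atTop_zero.norm
    rw [norm_zero] at h0
    obtain ⟨M, hM⟩ := h0.bddAbove_range
    exact ⟨M, fun k => hM ⟨k, rfl⟩⟩
  set s : ℝ := r / ‖q‖ with hs
  have hs0 : 0 ≤ s := div_nonneg hr hq0.le
  have hs1 : s < 1 := (div_lt_one hq0).mpr hq
  have hgeo : Summable fun k : ℕ => (M * s) * s ^ k :=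
    (summable_geometric_of_lt_one hs0 hs1).mul_left _
  apply Summable.of_nonneg_of_le (fun k => by positivity) (fun k => ?_) hgeo
  have hrs : r = s * ‖q‖ := by rw [hs, div_mul_cancel₀ _ hq0.ne']
  calc ‖a (k + 1)‖ * r ^ (k + 1) = ‖a (k + 1) * q ^ (k + 1)‖ * s ^ (k + 1) := by
        simp only [hrs, mul_pow, norm_mul, norm_pow]
        ring
    _ ≤ M * s ^ (k + 1) := by
        apply mul_le_mul_of_nonneg_right (hM k) (by positivity)
    _ = (M * s) * s ^ k := by ring


lemma abs_sub_le_of_uIoc {a b t : ℝ} (ht : t ∈ Set.uIoc a b) : |t - a| ≤ |b - a| := by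
  rcases Set.mem_uIoc.mp ht with ⟨h1, h2⟩ | ⟨h1, h2⟩ <;>
    rcases abs_cases (t - a) with ⟨e1, f1⟩ | ⟨e1, f1⟩ <;>
    rcases abs_cases (b - a) with ⟨e2, f2⟩ | ⟨e2, f2⟩ <;> linarith

lemma rectangle_zero (f : ℂ → ℂ) (x1 x2 y1 y2 : ℝ)
    (hd : DifferentiableOn ℂ f ((Set.uIcc x1 x2) ×ℂ (Set.uIcc y1 y2))) :
    (∫ x in x1..x2, f (x + y1 * Complex.I)) - (∫ x in x1..x2, f (x + y2 * Complex.I)) +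
      Complex.I • (∫ y in y1..y2, f (x2 + y * Complex.I)) -
      Complex.I • ∫ y in y1..y2, f (x1 + y * Complex.I) = 0 := by
  have := Complex.integral_boundary_rect_eq_zero_of_differentiableOn f
    (x1 + y1 * Complex.I) (x2 + y2 * Complex.I) (by simpa using hd)
  simpa using this

lemma exists_primitive {h : ℂ → ℂ} (hd : ∀ z : ℂ, 0 < z.im → DifferentiableAt ℂ h z) :
    ∃ H : ℂ → ℂ, ∀ z : ℂ, 0 < z.im → HasDerivAt H (h z) z := by
  have hcont : ∀ x : ℂ, 0 < x.im → ContinuousAt h x := fun x hx => (hd x hx).continuousAt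
  have hHor : ∀ (y a b : ℝ), 0 < y →
      IntervalIntegrable (fun t : ℝ => h ((t : ℂ) + (y : ℂ) * Complex.I)) volume a b := by
    intro y a b hy
    apply Continuous.intervalIntegrable
    rw [continuous_iff_continuousAt]
    intro t
    have him : (((t : ℂ)) + (y : ℂ) * Complex.I).im = y := by simp
    exact (hcont _ (by rw [him]; exact hy)).comp (by fun_prop)
  have hVer : ∀ (x a b : ℝ), 0 < a → 0 < b →
      IntervalIntegrable (fun s : ℝ => h ((x : ℂ) + (s : ℂ) * Complex.I)) volume a b := by
    intro x a b ha hb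
    apply ContinuousOn.intervalIntegrable
    intro s hs
    rw [Set.uIcc_eq_union] at hs
    have hs0 : 0 < s := by
      rcases hs with hs | hs
      · exact lt_of_lt_of_le ha hs.1
      · exact lt_of_lt_of_le hb hs.1
    have him : (((x : ℂ)) + (s : ℂ) * Complex.I).im = s := by simp
    exact ((hcont _ (by rw [him]; exact hs0)).comp (by fun_prop : Continuous
      (fun s : ℝ => (x : ℂ) + (s : ℂ) * Complex.I)).continuousAt).continuousWithinAt
  have hdRect : ∀ x1 x2 y1 y2 : ℝ, 0 < y1 → 0 < y2 →
      DifferentiableOn ℂ h ((Set.uIcc x1 x2) ×ℂ (Set.uIcc y1 y2)) := by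
    intro x1 x2 y1 y2 hy1 hy2
    intro ζ hζ
    rw [Complex.mem_reProdIm] at hζ
    rcases Set.mem_uIcc.mp hζ.2 with ⟨h1, _⟩ | ⟨h1, _⟩
    · exact (hd ζ (lt_of_lt_of_le hy1 h1)).differentiableWithinAt
    · exact (hd ζ (lt_of_lt_of_le hy2 h1)).differentiableWithinAt
  refine ⟨fun z => (∫ t in (0:ℝ)..z.re, h ((t : ℂ) + Complex.I)) +
    Complex.I * ∫ s in (1:ℝ)..z.im, h ((z.re : ℂ) + (s : ℂ) * Complex.I), ?_⟩
  intro z hz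
  set H : ℂ → ℂ := fun z => (∫ t in (0:ℝ)..z.re, h ((t : ℂ) + Complex.I)) +
    Complex.I * ∫ s in (1:ℝ)..z.im, h ((z.re : ℂ) + (s : ℂ) * Complex.I) with hHdef
  have key : ∀ w : ℂ, 0 < w.im → H w - H z =
      (∫ t in z.re..w.re, h ((t : ℂ) + (z.im : ℂ) * Complex.I)) +
        Complex.I * ∫ s in z.im..w.im, h ((w.re : ℂ) + (s : ℂ) * Complex.I) := by
    intro w hw
    have adj1 : (∫ t in (0:ℝ)..z.re, h ((t : ℂ) + Complex.I)) +
        (∫ t in z.re..w.re, h ((t : ℂ) + Complex.I)) =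
        ∫ t in (0:ℝ)..w.re, h ((t : ℂ) + Complex.I) := by
      have := intervalIntegral.integral_add_adjacent_intervals
        (hHor 1 0 z.re one_pos) (hHor 1 z.re w.re one_pos)
      simpa using this
    have adj2 : (∫ s in (1:ℝ)..z.im, h ((w.re : ℂ) + (s : ℂ) * Complex.I)) +
        (∫ s in z.im..w.im, h ((w.re : ℂ) + (s : ℂ) * Complex.I)) =
        ∫ s in (1:ℝ)..w.im, h ((w.re : ℂ) + (s : ℂ) * Complex.I) :=
      intervalIntegral.integral_add_adjacent_intervals
        (hVer w.re 1 z.im one_pos hz) (hVer w.re z.im w.im hz hw)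
    have rect := rectangle_zero h z.re w.re 1 z.im (hdRect _ _ _ _ one_pos hz)
    simp only [smul_eq_mul, Complex.ofReal_one, one_mul] at rect
    simp only [hHdef]
    linear_combination -adj1 - Complex.I * adj2 + rect
  rw [hasDerivAt_iff_isLittleO, Asymptotics.isLittleO_iff]
  intro c hc
  obtain ⟨δ, hδpos, hδ⟩ := Metric.continuousAt_iff.mp (hcont z hz) (c / 2) (by positivity)
  set δ' : ℝ := min δ z.im with hδ'def
  have hδ'pos : 0 < δ' := lt_min hδpos hz
  filter_upwards [Metric.ball_mem_nhds z (by positivity : (0:ℝ) < δ' / 2)] with w hw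
  rw [Metric.mem_ball, Complex.dist_eq] at hw
  have hwim : 0 < w.im := by
    have h1 : |w.im - z.im| ≤ ‖w - z‖ := by
      simpa using Complex.abs_im_le_norm (w - z)
    have h2 : |w.im - z.im| < z.im / 2 := lt_of_le_of_lt h1 (lt_of_lt_of_le hw
      (by rw [hδ'def]; have := min_le_right δ z.im; linarith))
    have := abs_lt.mp h2
    linarith
  have hkey := key w hwim
  have e1 : (∫ t in z.re..w.re, h ((t : ℂ) + (z.im : ℂ) * Complex.I)) -
      ((w.re : ℂ) - z.re) * h z =
      ∫ t in z.re..w.re, (h ((t : ℂ) + (z.im : ℂ) * Complex.I) - h z) := by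
    rw [intervalIntegral.integral_sub (hHor z.im z.re w.re hz) intervalIntegrable_const,
      intervalIntegral.integral_const]
    simp [Complex.real_smul]
  have e2 : (∫ s in z.im..w.im, h ((w.re : ℂ) + (s : ℂ) * Complex.I)) -
      ((w.im : ℂ) - z.im) * h z =
      ∫ s in z.im..w.im, (h ((w.re : ℂ) + (s : ℂ) * Complex.I) - h z) := by
    rw [intervalIntegral.integral_sub (hVer w.re z.im w.im hz hwim) intervalIntegrable_const,
      intervalIntegral.integral_const]
    simp [Complex.real_smul]
  have hsplit : H w - H z - (w - z) • h z =
      (∫ t in z.re..w.re, (h ((t : ℂ) + (z.im : ℂ) * Complex.I) - h z)) +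
        Complex.I * ∫ s in z.im..w.im, (h ((w.re : ℂ) + (s : ℂ) * Complex.I) - h z) := by
    rw [smul_eq_mul, hkey, ← e1, ← e2]
    have hwz : w - z = ((w.re : ℂ) - z.re) + ((w.im : ℂ) - z.im) * Complex.I := by
      apply Complex.ext <;> simp
    rw [hwz]
    ring
  rw [hsplit]
  have habsre : |w.re - z.re| ≤ ‖w - z‖ := by
    simpa using Complex.abs_re_le_norm (w - z)
  have habsim : |w.im - z.im| ≤ ‖w - z‖ := by
    simpa using Complex.abs_im_le_norm (w - z)
  have bound1 : ‖∫ t in z.re..w.re, (h ((t : ℂ) + (z.im : ℂ) * Complex.I) - h z)‖ ≤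
      (c / 2) * |w.re - z.re| := by
    apply intervalIntegral.norm_integral_le_of_norm_le_const
    intro t ht
    have ht' : |t - z.re| ≤ |w.re - z.re| := abs_sub_le_of_uIoc ht
    have hdist : dist ((t : ℂ) + (z.im : ℂ) * Complex.I) z < δ := by
      have hζ : ((t : ℂ) + (z.im : ℂ) * Complex.I) - z = ((t - z.re : ℝ) : ℂ) := by
        apply Complex.ext <;> simp
      rw [Complex.dist_eq, hζ, Complex.norm_real, Real.norm_eq_abs]
      calc |t - z.re| ≤ |w.re - z.re| := ht'
        _ ≤ ‖w - z‖ := habsre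
        _ < δ' / 2 := hw
        _ < δ := by rw [hδ'def]; have := min_le_left δ z.im; linarith
    have hlt := hδ hdist
    rw [dist_eq_norm] at hlt
    exact hlt.le
  have bound2 : ‖∫ s in z.im..w.im, (h ((w.re : ℂ) + (s : ℂ) * Complex.I) - h z)‖ ≤
      (c / 2) * |w.im - z.im| := by
    apply intervalIntegral.norm_integral_le_of_norm_le_const
    intro s hs
    have hs' : |s - z.im| ≤ |w.im - z.im| := abs_sub_le_of_uIoc hs
    have hdist : dist ((w.re : ℂ) + (s : ℂ) * Complex.I) z < δ := by
      rw [Complex.dist_eq]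
      have habs : ‖((w.re : ℂ) + (s : ℂ) * Complex.I) - z‖ ≤
          |w.re - z.re| + |s - z.im| := by
        have hrw : ((w.re : ℂ) + (s : ℂ) * Complex.I) - z =
            ((w.re - z.re : ℝ) : ℂ) + ((s - z.im : ℝ) : ℂ) * Complex.I := by
          apply Complex.ext <;> simp
        rw [hrw]
        refine le_trans (Complex.norm_le_abs_re_add_abs_im _) ?_
        simp
      calc ‖((w.re : ℂ) + (s : ℂ) * Complex.I) - z‖ ≤
            |w.re - z.re| + |s - z.im| := habs
        _ ≤ ‖w - z‖ + ‖w - z‖ := add_le_add habsre (le_trans hs' habsim)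
        _ < δ' / 2 + δ' / 2 := by linarith
        _ ≤ δ := by rw [hδ'def]; have := min_le_left δ z.im; linarith
    have hlt := hδ hdist
    rw [dist_eq_norm] at hlt
    exact hlt.le
  calc ‖(∫ t in z.re..w.re, (h ((t : ℂ) + (z.im : ℂ) * Complex.I) - h z)) +
        Complex.I * ∫ s in z.im..w.im, (h ((w.re : ℂ) + (s : ℂ) * Complex.I) - h z)‖ ≤
      ‖∫ t in z.re..w.re, (h ((t : ℂ) + (z.im : ℂ) * Complex.I) - h z)‖ +
        ‖Complex.I * ∫ s in z.im..w.im, (h ((w.re : ℂ) + (s : ℂ) * Complex.I) - h z)‖ :=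
      norm_add_le _ _
    _ ≤ (c / 2) * |w.re - z.re| + (c / 2) * |w.im - z.im| := by
        rw [norm_mul, Complex.norm_I, one_mul]
        exact add_le_add bound1 bound2
    _ ≤ (c / 2) * ‖w - z‖ + (c / 2) * ‖w - z‖ := by
        apply add_le_add <;> apply mul_le_mul_of_nonneg_left (by assumption) (by positivity)
    _ = c * ‖w - z‖ := by ring

lemma const_on_H {F : ℂ → ℂ} (hF : ∀ z : ℂ, 0 < z.im → HasDerivAt F 0 z) :
    ∀ z w : ℂ, 0 < z.im → 0 < w.im → F z = F w := by
  intro z w hz hw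
  apply Convex.is_const_of_fderivWithin_eq_zero (𝕜 := ℂ) (convex_halfSpace_im_gt 0)
    (fun x hx => (hF x hx).differentiableAt.differentiableWithinAt) ?_ hz hw
  intro x hx
  rw [fderivWithin_of_isOpen isOpenH hx, (hF x hx).hasFDerivAt.fderiv]
  ext v
  simp



/-- The translation matrix `T`. -/
def Tmat : SL2 ℤ := ⟨!![1, 1; 0, 1], by simp [Matrix.det_fin_two_of]⟩

/-- The inversion matrix `S`. -/
def Smat : SL2 ℤ := ⟨!![0, -1; 1, 0], by simp [Matrix.det_fin_two_of]⟩

lemma smulZ_T (τ : ℂ) : smulZ Tmat τ = τ + 1 := by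
  simp [smulZ, Tmat]

lemma smulZ_S (τ : ℂ) : smulZ Smat τ = -τ⁻¹ := by
  simp [smulZ, Smat]
  rw [neg_div, div_eq_mul_inv, one_mul]

lemma im_neg_inv {τ : ℂ} (hτ : 0 < τ.im) : 0 < (-τ⁻¹).im := by
  have hτ0 : τ ≠ 0 := fun h0 => by simp [h0] at hτ
  rw [Complex.neg_im, Complex.inv_im, neg_div, neg_neg]
  exact div_pos hτ (Complex.normSq_pos.mpr hτ0)

lemma summable_expansion {n : ℕ} (hn : 1 ≤ n) {a : ℕ → ℂ} {f : ℂ → ℂ} {p : ℕ}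
    (hexp : ∀ τ : ℂ, 0 < τ.im →
      f τ = eC (-(n : ℂ) * τ) + ∑' k : ℕ, a (k + 1) * eC (((k + 1 : ℕ) : ℂ) * τ))
    (htrans : ∀ τ : ℂ, 0 < τ.im → f (-τ⁻¹) = τ ^ p * f τ) :
    ∀ τ : ℂ, 0 < τ.im → Summable fun k : ℕ => a (k + 1) * eC (((k + 1 : ℕ) : ℂ) * τ) := by
  by_contra hns
  push_neg at hns
  obtain ⟨τ1, hτ1, hτ1ns⟩ := hns
  have hprop : ∀ τ : ℂ, 0 < τ.im → τ.im < τ1.im →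
      ¬ Summable (fun k : ℕ => a (k + 1) * eC (((k + 1 : ℕ) : ℂ) * τ)) := by
    intro τ hτ hlt hs
    apply hτ1ns
    have h1 : Summable fun k : ℕ => a (k + 1) * eC τ ^ (k + 1) := by
      simpa only [eC_pow] using hs
    have hlt' : ‖eC τ1‖ < ‖eC τ‖ := by
      rw [abs_eC, abs_eC]
      apply Real.exp_lt_exp.mpr
      nlinarith [Real.pi_pos]
    have h2 := summable_norm_shift h1 (norm_nonneg _) hlt'
    apply Summable.of_norm
    have hcongr : ∀ k : ℕ, ‖a (k + 1) * eC (((k + 1 : ℕ) : ℂ) * τ1)‖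
        = ‖a (k + 1)‖ * ‖eC τ1‖ ^ (k + 1) := by
      intro k
      rw [eC_pow (k + 1) τ1]
      simp
    exact (funext hcongr : _) ▸ h2
  have hzero : ∀ τ : ℂ, 0 < τ.im → τ.im < τ1.im → f τ = eC (-(n : ℂ) * τ) := by
    intro τ hτ hlt
    rw [hexp τ hτ, tsum_eq_zero_of_not_summable (hprop τ hτ hlt), add_zero]
  set ε : ℝ := τ1.im / 2 with hε
  have hεpos : 0 < ε := by rw [hε]; positivity
  set τ : ℂ := ⟨2, ε⟩ with hτdef
  have hτim : τ.im = ε := rfl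
  have hτre : τ.re = 2 := rfl
  have hτne : τ ≠ 0 := by
    intro h0
    have : τ.re = 0 := by rw [h0]; rfl
    rw [hτre] at this
    norm_num at this
  have hnsq : Complex.normSq τ = 4 + ε ^ 2 := by
    rw [Complex.normSq_apply, hτre, hτim]; ring
  have hwim : (-τ⁻¹).im = ε / (4 + ε ^ 2) := by
    rw [Complex.neg_im, Complex.inv_im, hnsq, hτim, neg_div, neg_neg]
  have hwpos : 0 < (-τ⁻¹).im := by rw [hwim]; positivity
  have hwlt : (-τ⁻¹).im < ε := by
    rw [hwim, div_lt_iff₀ (by positivity)]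
    nlinarith
  have h1 : f (-τ⁻¹) = eC (-(n : ℂ) * (-τ⁻¹)) :=
    hzero _ hwpos (lt_trans hwlt (by rw [hε]; linarith))
  have h2 : f τ = eC (-(n : ℂ) * τ) := hzero _ (by rw [hτim]; exact hεpos) (by rw [hτim, hε]; linarith)
  have h3 := htrans τ (by rw [hτim]; exact hεpos)
  rw [h1, h2] at h3
  have habs3 := congrArg (fun x : ℂ => ‖x‖) h3
  rw [norm_mul, norm_pow, abs_eC, abs_eC] at habs3
  have hAim : (-(n : ℂ) * (-τ⁻¹)).im = -((n : ℝ) * (-τ⁻¹).im) := by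
    simp [Complex.mul_im]
  have hBim : (-(n : ℂ) * τ).im = -((n : ℝ) * τ.im) := by
    simp [Complex.mul_im]
  rw [hAim, hBim] at habs3
  have hn1 : (1 : ℝ) ≤ (n : ℝ) := by exact_mod_cast hn
  have habsτ : 1 ≤ ‖τ‖ := by
    have := Complex.abs_re_le_norm τ
    rw [hτre] at this
    calc (1:ℝ) ≤ |2| := by norm_num
      _ ≤ ‖τ‖ := this
  have hpow : 1 ≤ ‖τ‖ ^ p := one_le_pow₀ habsτ
  have hlt2 : Real.exp (-(2 * Real.pi * -((n : ℝ) * (-τ⁻¹).im))) <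
      ‖τ‖ ^ p * Real.exp (-(2 * Real.pi * -((n : ℝ) * τ.im))) := by
    have hexp1 : Real.exp (-(2 * Real.pi * -((n : ℝ) * (-τ⁻¹).im))) <
        Real.exp (-(2 * Real.pi * -((n : ℝ) * τ.im))) := by
      apply Real.exp_lt_exp.mpr
      rw [hτim]
      have h2π : 0 < 2 * Real.pi * (n : ℝ) := by positivity
      nlinarith [mul_lt_mul_of_pos_left hwlt h2π]
    calc Real.exp (-(2 * Real.pi * -((n : ℝ) * (-τ⁻¹).im)))
        < Real.exp (-(2 * Real.pi * -((n : ℝ) * τ.im))) := hexp1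
      _ ≤ ‖τ‖ ^ p * Real.exp (-(2 * Real.pi * -((n : ℝ) * τ.im))) :=
          le_mul_of_one_le_left (Real.exp_pos _).le hpow
  exact absurd habs3 (ne_of_lt hlt2)

lemma norm_eC_int (β : ℂ) (d : ℤ) (t : ℝ) :
    ‖β * eC ((d : ℂ) * (Complex.I + (t : ℂ)))‖ = ‖β‖ * Real.exp (-(2 * Real.pi * (d : ℝ))) := by
  rw [norm_mul, abs_eC]
  congr 2
  simp [Complex.mul_im]

lemma integral_norm_eC (β : ℂ) (d : ℤ) :
    ∫ t in Set.Ioc (0:ℝ) 1, ‖β * eC ((d : ℂ) * (Complex.I + (t : ℂ)))‖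
      = ‖β‖ * Real.exp (-(2 * Real.pi * (d : ℝ))) := by
  simp only [norm_eC_int]
  rw [MeasureTheory.setIntegral_const]
  simp [Real.volume_Ioc]

lemma cont_eC (d : ℂ) : Continuous fun t : ℝ => eC (d * (Complex.I + (t : ℂ))) := by
  simp only [eC]
  fun_prop

lemma integral_eC_Ioc (d : ℤ) :
    (∫ t in Set.Ioc (0:ℝ) 1, eC ((d : ℂ) * (Complex.I + (t : ℂ)))) = if d = 0 then 1 else 0 := by
  rw [← intervalIntegral.integral_of_le zero_le_one]
  exact integral_eC d Complex.I



lemma norm_eC_nat (β : ℂ) (k : ℕ) (t : ℝ) :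
    ‖β * eC (((k + 1 : ℕ) : ℂ) * (Complex.I + (t : ℂ)))‖
      = ‖β‖ * Real.exp (-(2 * Real.pi)) ^ (k + 1) := by
  rw [norm_mul, abs_eC, ← Real.exp_nat_mul]
  congr 2
  have him : ((((k + 1 : ℕ) : ℂ)) * (Complex.I + (t : ℂ))).im = (k + 1 : ℕ) := by
    simp [Complex.mul_im]
  rw [him]
  push_cast
  ring

lemma integral_cross {a : ℕ → ℂ} {r : ℕ} (hr : 1 ≤ r)
    (hnorm : Summable fun k : ℕ => ‖a (k + 1)‖ * Real.exp (-(2 * Real.pi)) ^ (k + 1)) :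
    (∫ t in Set.Ioc (0:ℝ) 1,
        (eC (-(r : ℂ) * (Complex.I + (t : ℂ))) *
          ∑' k : ℕ, a (k + 1) * eC (((k + 1 : ℕ) : ℂ) * (Complex.I + (t : ℂ))))) = a r := by
  have hterm : ∀ t : ℝ, (eC (-(r : ℂ) * (Complex.I + (t : ℂ))) *
      ∑' k : ℕ, a (k + 1) * eC (((k + 1 : ℕ) : ℂ) * (Complex.I + (t : ℂ))))
      = ∑' k : ℕ, a (k + 1) * eC (((k + 1 - r : ℤ) : ℂ) * (Complex.I + (t : ℂ))) := by
    intro t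
    rw [← tsum_mul_left]
    congr 1
    funext k
    rw [show eC (-(r : ℂ) * (Complex.I + (t : ℂ))) *
        (a (k + 1) * eC (((k + 1 : ℕ) : ℂ) * (Complex.I + (t : ℂ))))
      = a (k + 1) * (eC (-(r : ℂ) * (Complex.I + (t : ℂ))) *
          eC (((k + 1 : ℕ) : ℂ) * (Complex.I + (t : ℂ)))) from by ring, ← eC_add]
    congr 2
    push_cast
    ring
  simp only [hterm]
  rw [← MeasureTheory.integral_tsum_of_summable_integral_norm ?hint ?hsum]
  case hint =>
    intro k
    exact (continuous_const.mul (cont_eC _)).integrableOn_Ioc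
  case hsum =>
    apply Summable.congr (hnorm.mul_right (Real.exp (2 * Real.pi * r)))
    intro k
    rw [integral_norm_eC]
    rw [mul_assoc, ← Real.exp_nat_mul, ← Real.exp_add]
    congr 2
    push_cast
    ring
  · have hval : ∀ k : ℕ,
        (∫ t in Set.Ioc (0:ℝ) 1, a (k + 1) * eC (((k + 1 - r : ℤ) : ℂ) * (Complex.I + (t : ℂ))))
          = a (k + 1) * (if ((k : ℤ) + 1 - r) = 0 then 1 else 0) := by
      intro k
      rw [MeasureTheory.integral_const_mul, integral_eC_Ioc]
    simp only [hval]
    rw [tsum_eq_single (r - 1)]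
    · rw [if_pos (by omega), mul_one, Nat.sub_add_cancel hr]
    · intro k hk
      rw [if_neg ?_, mul_zero]
      intro h0
      exact hk (by omega)

lemma integral_cross2 {a b' : ℕ → ℂ}
    (hna : Summable fun k : ℕ => ‖a (k + 1)‖ * Real.exp (-(2 * Real.pi)) ^ (k + 1))
    (hnb : Summable fun k : ℕ => ‖b' (k + 1)‖ * Real.exp (-(2 * Real.pi)) ^ (k + 1)) :
    (∫ t in Set.Ioc (0:ℝ) 1,
        ((∑' k : ℕ, a (k + 1) * eC (((k + 1 : ℕ) : ℂ) * (Complex.I + (t : ℂ)))) *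
          ∑' k : ℕ, b' (k + 1) * eC (((k + 1 : ℕ) : ℂ) * (Complex.I + (t : ℂ))))) = 0 := by
  have hsa : ∀ t : ℝ, Summable fun k : ℕ =>
      ‖a (k + 1) * eC (((k + 1 : ℕ) : ℂ) * (Complex.I + (t : ℂ)))‖ := by
    intro t
    apply Summable.congr hna
    intro k
    rw [norm_eC_nat]
  have hsb : ∀ t : ℝ, Summable fun k : ℕ =>
      ‖b' (k + 1) * eC (((k + 1 : ℕ) : ℂ) * (Complex.I + (t : ℂ)))‖ := by
    intro t
    apply Summable.congr hnb
    intro k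
    rw [norm_eC_nat]
  have hterm : ∀ t : ℝ, ((∑' k : ℕ, a (k + 1) * eC (((k + 1 : ℕ) : ℂ) * (Complex.I + (t : ℂ)))) *
      ∑' k : ℕ, b' (k + 1) * eC (((k + 1 : ℕ) : ℂ) * (Complex.I + (t : ℂ))))
      = ∑' kl : ℕ × ℕ, (a (kl.1 + 1) * b' (kl.2 + 1)) *
          eC (((kl.1 + kl.2 + 2 : ℤ) : ℂ) * (Complex.I + (t : ℂ))) := by
    intro t
    rw [tsum_mul_tsum_of_summable_norm (hsa t) (hsb t)]
    congr 1
    funext kl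
    rw [show (a (kl.1 + 1) * eC (((kl.1 + 1 : ℕ) : ℂ) * (Complex.I + (t : ℂ)))) *
        (b' (kl.2 + 1) * eC (((kl.2 + 1 : ℕ) : ℂ) * (Complex.I + (t : ℂ))))
      = (a (kl.1 + 1) * b' (kl.2 + 1)) * (eC (((kl.1 + 1 : ℕ) : ℂ) * (Complex.I + (t : ℂ))) *
          eC (((kl.2 + 1 : ℕ) : ℂ) * (Complex.I + (t : ℂ)))) from by ring, ← eC_add]
    congr 2
    push_cast
    ring
  simp only [hterm]
  rw [← MeasureTheory.integral_tsum_of_summable_integral_norm ?hint ?hsum]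
  case hint =>
    intro kl
    exact (continuous_const.mul (cont_eC _)).integrableOn_Ioc
  case hsum =>
    have hmul := Summable.mul_of_nonneg hna hnb
      (fun k => by positivity) (fun k => by positivity)
    apply Summable.congr hmul
    intro kl
    rw [integral_norm_eC, norm_mul]
    rw [show (‖a (kl.1 + 1)‖ * Real.exp (-(2 * Real.pi)) ^ (kl.1 + 1)) *
        (‖b' (kl.2 + 1)‖ * Real.exp (-(2 * Real.pi)) ^ (kl.2 + 1))
      = (‖a (kl.1 + 1)‖ * ‖b' (kl.2 + 1)‖) *
          (Real.exp (-(2 * Real.pi)) ^ (kl.1 + 1) * Real.exp (-(2 * Real.pi)) ^ (kl.2 + 1)) from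
        by ring, ← pow_add, ← Real.exp_nat_mul]
    congr 2
    push_cast
    ring
  · have hval : ∀ kl : ℕ × ℕ,
        (∫ t in Set.Ioc (0:ℝ) 1, (a (kl.1 + 1) * b' (kl.2 + 1)) *
          eC (((kl.1 + kl.2 + 2 : ℤ) : ℂ) * (Complex.I + (t : ℂ)))) = 0 := by
      intro kl
      rw [MeasureTheory.integral_const_mul, integral_eC_Ioc, if_neg (by omega), mul_zero]
    simp only [hval, tsum_zero]

end ZagierAux


/-- **Zagier duality**: the families `{j_n}` and `{S_n = -j_n'/n}` are dual, i.e.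
`c_m(n) = -b_n(m)` for all `n, m ≥ 1`, where `j_n = q^{-n} + Σ_{m≥1} c_n(m) q^m` and
`S_n = q^{-n} + Σ_{m≥1} b_n(m) q^m`. -/
theorem zagier_duality
    (c b : ℕ → ℕ → ℂ) (j j' : ℕ → ℂ → ℂ) (hj : IsJFamily c j)
    (hj' : ∀ n : ℕ, 1 ≤ n → ∀ τ : ℂ, 0 < τ.im →
      HasDerivAt (j n) (2 * Real.pi * Complex.I * j' n τ) τ)
    (hb : ∀ n : ℕ, 1 ≤ n → ∀ τ : ℂ, 0 < τ.im →
      -(j' n τ) / (n : ℂ) =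
        eC (-(n : ℂ) * τ) + ∑' m : ℕ, b n (m + 1) * eC (((m + 1 : ℕ) : ℂ) * τ)) :
    ∀ n m : ℕ, 1 ≤ n → 1 ≤ m → c m n = -(b n m) := by
  classical
  intro n m hn hm
  obtain ⟨jdm, jim, jem⟩ := hj m hm
  obtain ⟨jdn, jin, jen⟩ := hj n hn
  have hπI : (2 * (Real.pi : ℂ) * Complex.I) ≠ 0 := by
    simp [Real.pi_ne_zero, Complex.I_ne_zero]
  have hnC : (n : ℂ) ≠ 0 := Nat.cast_ne_zero.mpr (by omega)
  have hτne : ∀ τ : ℂ, 0 < τ.im → τ ≠ 0 := fun τ hτ h0 => by simp [h0] at hτ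
  have hTm : ∀ τ : ℂ, 0 < τ.im → j m (τ + 1) = j m τ := by
    intro τ hτ
    have h0 := jim ZagierAux.Tmat τ hτ
    rwa [ZagierAux.smulZ_T] at h0
  have hTn : ∀ τ : ℂ, 0 < τ.im → j n (τ + 1) = j n τ := by
    intro τ hτ
    have h0 := jin ZagierAux.Tmat τ hτ
    rwa [ZagierAux.smulZ_T] at h0
  have hSm : ∀ τ : ℂ, 0 < τ.im → j m (-τ⁻¹) = j m τ := by
    intro τ hτ
    have h0 := jim ZagierAux.Smat τ hτ
    rwa [ZagierAux.smulZ_S] at h0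
  have hSn : ∀ τ : ℂ, 0 < τ.im → j n (-τ⁻¹) = j n τ := by
    intro τ hτ
    have h0 := jin ZagierAux.Smat τ hτ
    rwa [ZagierAux.smulZ_S] at h0
  have hT' : ∀ τ : ℂ, 0 < τ.im → j' n (τ + 1) = j' n τ := by
    intro τ hτ
    have hτ1 : 0 < (τ + 1).im := by simpa using hτ
    have h1 : HasDerivAt (fun w => j n (w + 1))
        (2 * (Real.pi : ℂ) * Complex.I * j' n (τ + 1) * 1) τ :=
      (hj' n hn (τ + 1) hτ1).comp τ ((hasDerivAt_id τ).add_const 1)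
    have heq : (fun w => j n (w + 1)) =ᶠ[nhds τ] j n := by
      filter_upwards [ZagierAux.isOpenH.mem_nhds hτ] with w hw
      exact hTn w hw
    have h2 : HasDerivAt (fun w => j n (w + 1)) (2 * (Real.pi : ℂ) * Complex.I * j' n τ) τ :=
      (hj' n hn τ hτ).congr_of_eventuallyEq heq
    have h3 := h1.unique h2
    rw [mul_one] at h3
    exact mul_left_cancel₀ hπI h3
  have hS' : ∀ τ : ℂ, 0 < τ.im → j' n (-τ⁻¹) = τ ^ 2 * j' n τ := by
    intro τ hτ
    have h1 : HasDerivAt (fun w => j n (-w⁻¹))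
        (2 * (Real.pi : ℂ) * Complex.I * j' n (-τ⁻¹) * (τ ^ 2)⁻¹) τ :=
      (hj' n hn (-τ⁻¹) (ZagierAux.im_neg_inv hτ)).comp τ
        (by simpa [Pi.neg_def] using (hasDerivAt_inv (hτne τ hτ)).neg)
    have heq : (fun w => j n (-w⁻¹)) =ᶠ[nhds τ] j n := by
      filter_upwards [ZagierAux.isOpenH.mem_nhds hτ] with w hw
      exact hSn w hw
    have h2 : HasDerivAt (fun w => j n (-w⁻¹)) (2 * (Real.pi : ℂ) * Complex.I * j' n τ) τ :=
      (hj' n hn τ hτ).congr_of_eventuallyEq heq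
    have h3 := h1.unique h2
    have hτ2 : τ ^ 2 ≠ 0 := pow_ne_zero _ (hτne τ hτ)
    apply mul_left_cancel₀ hπI
    have h4 := congrArg (fun x => x * τ ^ 2) h3
    rw [mul_assoc, inv_mul_cancel₀ hτ2, mul_one] at h4
    rw [h4]
    ring
  have hsumc : ∀ τ : ℂ, 0 < τ.im →
      Summable fun k : ℕ => c m (k + 1) * eC (((k + 1 : ℕ) : ℂ) * τ) := by
    apply ZagierAux.summable_expansion hm (fun τ hτ => jem τ hτ) (p := 0)
    intro τ hτ
    rw [pow_zero, one_mul]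
    exact hSm τ hτ
  have hsumb : ∀ τ : ℂ, 0 < τ.im →
      Summable fun k : ℕ => b n (k + 1) * eC (((k + 1 : ℕ) : ℂ) * τ) := by
    apply ZagierAux.summable_expansion hn (fun τ hτ => hb n hn τ hτ) (p := 2)
    intro τ hτ
    rw [neg_div, neg_div, hS' τ hτ]
    ring
  have hIhalf : (0:ℝ) < (Complex.I / 2).im := by simp
  have hrlt : Real.exp (-(2 * Real.pi)) < ‖eC (Complex.I / 2)‖ := by
    rw [ZagierAux.abs_eC]
    apply Real.exp_lt_exp.mpr
    have h4 : (Complex.I / 2).im = 1 / 2 := by simp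
    rw [h4]
    nlinarith [Real.pi_pos]
  have hnormc : Summable fun k : ℕ => ‖c m (k + 1)‖ * Real.exp (-(2 * Real.pi)) ^ (k + 1) := by
    apply ZagierAux.summable_norm_shift _ (Real.exp_pos _).le hrlt
    simpa only [ZagierAux.eC_pow] using hsumc (Complex.I / 2) hIhalf
  have hnormb : Summable fun k : ℕ => ‖b n (k + 1)‖ * Real.exp (-(2 * Real.pi)) ^ (k + 1) := by
    apply ZagierAux.summable_norm_shift _ (Real.exp_pos _).le hrlt
    simpa only [ZagierAux.eC_pow] using hsumb (Complex.I / 2) hIhalf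
  have hj'd : ∀ τ : ℂ, 0 < τ.im → DifferentiableAt ℂ (j' n) τ := by
    have hjnDO : DifferentiableOn ℂ (j n) {z : ℂ | 0 < z.im} :=
      fun z hz => (jdn z hz).differentiableWithinAt
    have hanal := (hjnDO.analyticOnNhd ZagierAux.isOpenH).deriv_of_isOpen ZagierAux.isOpenH
    intro τ hτ
    have h1 : DifferentiableAt ℂ (fun w => (2 * (Real.pi : ℂ) * Complex.I)⁻¹ * deriv (j n) w) τ :=
      ((hanal τ hτ).differentiableAt).const_mul _
    apply h1.congr_of_eventuallyEq
    filter_upwards [ZagierAux.isOpenH.mem_nhds hτ] with w hw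
    rw [(hj' n hn w hw).deriv, inv_mul_cancel_left₀ hπI]
  have hfdiff : ∀ z : ℂ, 0 < z.im → DifferentiableAt ℂ (fun τ => j m τ * j' n τ) z :=
    fun z hz => (jdm z hz).mul (hj'd z hz)
  obtain ⟨H, hH⟩ := ZagierAux.exists_primitive hfdiff
  have hfT : ∀ τ : ℂ, 0 < τ.im → j m (τ + 1) * j' n (τ + 1) = j m τ * j' n τ := by
    intro τ hτ
    rw [hTm τ hτ, hT' τ hτ]
  have hfS : ∀ τ : ℂ, 0 < τ.im →
      j m (-τ⁻¹) * j' n (-τ⁻¹) = τ ^ 2 * (j m τ * j' n τ) := by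
    intro τ hτ
    rw [hSm τ hτ, hS' τ hτ]
    ring
  have hHS : ∀ τ : ℂ, 0 < τ.im → H (-τ⁻¹) = H τ := by
    have hG2 : ∀ τ : ℂ, 0 < τ.im → HasDerivAt (fun w => H (-w⁻¹) - H w) 0 τ := by
      intro τ hτ
      have h1 : HasDerivAt (fun w => H (-w⁻¹))
          (j m (-τ⁻¹) * j' n (-τ⁻¹) * (τ ^ 2)⁻¹) τ :=
        (hH (-τ⁻¹) (ZagierAux.im_neg_inv hτ)).comp τ
          (by simpa [Pi.neg_def] using (hasDerivAt_inv (hτne τ hτ)).neg)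
      have h2 := h1.sub (hH τ hτ)
      have hτ2 : τ ^ 2 ≠ 0 := pow_ne_zero _ (hτne τ hτ)
      have hval : j m (-τ⁻¹) * j' n (-τ⁻¹) * (τ ^ 2)⁻¹ - j m τ * j' n τ = 0 := by
        rw [hfS τ hτ]
        field_simp
        rw [div_self (hτne τ hτ), sub_self, mul_zero]
      rwa [hval] at h2
    intro τ hτ
    have h1 : H (-τ⁻¹) - H τ = H (-Complex.I⁻¹) - H Complex.I :=
      ZagierAux.const_on_H hG2 τ Complex.I hτ (by simp)
    rw [Complex.inv_I, neg_neg, sub_self] at h1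
    exact sub_eq_zero.mp h1
  have hs3 : (0:ℝ) < Real.sqrt 3 := Real.sqrt_pos.mpr (by norm_num)
  have hsq : Real.sqrt 3 * Real.sqrt 3 = 3 := Real.mul_self_sqrt (by norm_num)
  set ρ : ℂ := ⟨-(1/2), Real.sqrt 3 / 2⟩ with hρdef
  have hρim : ρ.im = Real.sqrt 3 / 2 := rfl
  have hρre : ρ.re = -(1/2) := rfl
  have hρpos : 0 < ρ.im := by rw [hρim]; positivity
  have hρ1pos : 0 < (ρ + 1).im := by
    rw [Complex.add_im, Complex.one_im, add_zero]
    exact hρpos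
  have hρmul : ρ * (ρ + 1) = -1 := by
    apply Complex.ext
    · simp only [Complex.mul_re, Complex.add_re, Complex.add_im, Complex.one_re,
        Complex.one_im, Complex.neg_re, Complex.neg_im, hρre, hρim, add_zero]
      nlinarith
    · simp only [Complex.mul_im, Complex.add_re, Complex.add_im, Complex.one_re,
        Complex.one_im, Complex.neg_re, Complex.neg_im, hρre, hρim, add_zero]
      ring_nf
  have hρ1ne : ρ + 1 ≠ 0 := hτne _ hρ1pos
  have hfix : -(ρ + 1)⁻¹ = ρ := by
    field_simp
    linear_combination -hρmul
  have hHT : ∀ τ : ℂ, 0 < τ.im → H (τ + 1) = H τ := by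
    have hG1 : ∀ τ : ℂ, 0 < τ.im → HasDerivAt (fun w => H (w + 1) - H w) 0 τ := by
      intro τ hτ
      have hτ1 : 0 < (τ + 1).im := by simpa using hτ
      have h1 : HasDerivAt (fun w => H (w + 1)) (j m (τ + 1) * j' n (τ + 1) * 1) τ :=
        (hH (τ + 1) hτ1).comp τ ((hasDerivAt_id τ).add_const 1)
      have h2 := h1.sub (hH τ hτ)
      have hval : j m (τ + 1) * j' n (τ + 1) * 1 - j m τ * j' n τ = 0 := by
        rw [mul_one, hfT τ hτ, sub_self]
      rwa [hval] at h2
    intro τ hτ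
    have h1 : H (τ + 1) - H τ = H (ρ + 1) - H ρ :=
      ZagierAux.const_on_H hG1 τ ρ hτ hρpos
    have h2 : H (ρ + 1) = H ρ := by
      conv_rhs => rw [← hfix]
      exact (hHS (ρ + 1) hρ1pos).symm
    rw [h2, sub_self] at h1
    exact sub_eq_zero.mp h1
  have himt : ∀ t : ℝ, (0:ℝ) < (Complex.I + (t : ℂ)).im := by intro t; simp
  have hcjm : Continuous fun t : ℝ => j m (Complex.I + (t : ℂ)) := by
    rw [continuous_iff_continuousAt]
    intro t
    have hin : Continuous fun s : ℝ => Complex.I + (s : ℂ) := by fun_prop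
    exact ContinuousAt.comp (f := fun s : ℝ => Complex.I + (s : ℂ))
      ((jdm _ (himt t)).continuousAt) hin.continuousAt
  have hcj' : Continuous fun t : ℝ => j' n (Complex.I + (t : ℂ)) := by
    rw [continuous_iff_continuousAt]
    intro t
    have hin : Continuous fun s : ℝ => Complex.I + (s : ℂ) := by fun_prop
    exact ContinuousAt.comp (f := fun s : ℝ => Complex.I + (s : ℂ))
      ((hj'd _ (himt t)).continuousAt) hin.continuousAt
  have hFTC : (∫ t in (0:ℝ)..1, j m (Complex.I + (t : ℂ)) * j' n (Complex.I + (t : ℂ))) = 0 := by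
    have hderφ : ∀ t ∈ Set.uIcc (0:ℝ) 1, HasDerivAt (fun u : ℝ => H (Complex.I + (u : ℂ)))
        (j m (Complex.I + (t : ℂ)) * j' n (Complex.I + (t : ℂ))) t := by
      intro t _
      have h1 : HasDerivAt (fun w : ℂ => H (Complex.I + w))
          (j m (Complex.I + (t : ℂ)) * j' n (Complex.I + (t : ℂ)) * 1) (t : ℂ) :=
        (hH (Complex.I + (t : ℂ)) (himt t)).comp (t : ℂ) ((hasDerivAt_id _).const_add Complex.I)
      rw [mul_one] at h1
      exact h1.comp_ofReal
    rw [intervalIntegral.integral_eq_sub_of_hasDerivAt hderφ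
      ((hcjm.mul hcj').intervalIntegrable 0 1)]
    push_cast
    rw [hHT Complex.I (by simp)]
    simp
  set F1 : ℝ → ℂ := fun t => eC (-(m : ℂ) * (Complex.I + (t : ℂ))) with hF1
  set F2 : ℝ → ℂ := fun t => eC (-(n : ℂ) * (Complex.I + (t : ℂ))) with hF2
  set G1 : ℝ → ℂ := fun t => j m (Complex.I + (t : ℂ)) - F1 t with hG1
  set G2 : ℝ → ℂ := fun t => -(j' n (Complex.I + (t : ℂ))) / (n : ℂ) - F2 t with hG2
  have hG1sum : ∀ t : ℝ, G1 t =
      ∑' k : ℕ, c m (k + 1) * eC (((k + 1 : ℕ) : ℂ) * (Complex.I + (t : ℂ))) := by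
    intro t
    simp only [hG1, hF1]
    rw [jem _ (himt t)]
    ring
  have hG2sum : ∀ t : ℝ, G2 t =
      ∑' k : ℕ, b n (k + 1) * eC (((k + 1 : ℕ) : ℂ) * (Complex.I + (t : ℂ))) := by
    intro t
    simp only [hG2, hF2]
    rw [hb n hn _ (himt t)]
    ring
  have hpoint : ∀ t : ℝ, j m (Complex.I + (t : ℂ)) * j' n (Complex.I + (t : ℂ)) =
      -(n : ℂ) * (F1 t * F2 t + F1 t * G2 t + G1 t * F2 t + G1 t * G2 t) := by
    intro t
    have e1 : j m (Complex.I + (t : ℂ)) = F1 t + G1 t := by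
      simp only [hG1]
      ring
    have e2 : -(j' n (Complex.I + (t : ℂ))) / (n : ℂ) = F2 t + G2 t := by
      simp only [hG2]
      ring
    have e3 : j' n (Complex.I + (t : ℂ)) = -(n : ℂ) * (F2 t + G2 t) := by
      rw [← e2]
      field_simp
    rw [e1, e3]
    ring
  have hcF1 : Continuous F1 := by
    rw [hF1]
    exact ZagierAux.cont_eC _
  have hcF2 : Continuous F2 := by
    rw [hF2]
    exact ZagierAux.cont_eC _
  have hcG1 : Continuous G1 := by
    rw [hG1]
    exact hcjm.sub hcF1
  have hcG2 : Continuous G2 := by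
    rw [hG2]
    exact (hcj'.neg.div_const _).sub hcF2
  have hiA : MeasureTheory.IntegrableOn (fun t : ℝ => F1 t * F2 t) (Set.Ioc (0:ℝ) 1) :=
    (hcF1.mul hcF2).integrableOn_Ioc
  have hiB : MeasureTheory.IntegrableOn (fun t : ℝ => F1 t * G2 t) (Set.Ioc (0:ℝ) 1) :=
    (hcF1.mul hcG2).integrableOn_Ioc
  have hiC : MeasureTheory.IntegrableOn (fun t : ℝ => G1 t * F2 t) (Set.Ioc (0:ℝ) 1) :=
    (hcG1.mul hcF2).integrableOn_Ioc
  have hiD : MeasureTheory.IntegrableOn (fun t : ℝ => G1 t * G2 t) (Set.Ioc (0:ℝ) 1) :=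
    (hcG1.mul hcG2).integrableOn_Ioc
  have hA : (∫ t in Set.Ioc (0:ℝ) 1, F1 t * F2 t) = 0 := by
    have hAt : ∀ t : ℝ, F1 t * F2 t
        = eC (((-(m : ℤ) - n : ℤ) : ℂ) * (Complex.I + (t : ℂ))) := by
      intro t
      simp only [hF1, hF2]
      rw [← ZagierAux.eC_add]
      congr 1
      push_cast
      ring
    simp only [hAt]
    rw [ZagierAux.integral_eC_Ioc, if_neg (by omega)]
  have hB : (∫ t in Set.Ioc (0:ℝ) 1, F1 t * G2 t) = b n m := by
    simp only [hF1, hG2sum]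
    exact ZagierAux.integral_cross hm hnormb
  have hC : (∫ t in Set.Ioc (0:ℝ) 1, G1 t * F2 t) = c m n := by
    have hcomm : ∀ t : ℝ, G1 t * F2 t = F2 t * G1 t := fun t => mul_comm _ _
    simp only [hcomm]
    simp only [hF2, hG1sum]
    exact ZagierAux.integral_cross hn hnormc
  have hD : (∫ t in Set.Ioc (0:ℝ) 1, G1 t * G2 t) = 0 := by
    simp only [hG1sum, hG2sum]
    exact ZagierAux.integral_cross2 hnormc hnormb
  have hsum4 : (∫ t in Set.Ioc (0:ℝ) 1,
      j m (Complex.I + (t : ℂ)) * j' n (Complex.I + (t : ℂ)))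
      = -(n : ℂ) * (0 + b n m + c m n + 0) := by
    calc (∫ t in Set.Ioc (0:ℝ) 1, j m (Complex.I + (t : ℂ)) * j' n (Complex.I + (t : ℂ)))
        = ∫ t in Set.Ioc (0:ℝ) 1,
            -(n : ℂ) * (F1 t * F2 t + F1 t * G2 t + G1 t * F2 t + G1 t * G2 t) := by
          simp only [hpoint]
      _ = -(n : ℂ) * ∫ t in Set.Ioc (0:ℝ) 1,
            (F1 t * F2 t + F1 t * G2 t + G1 t * F2 t + G1 t * G2 t) := by
          rw [MeasureTheory.integral_const_mul]
      _ = -(n : ℂ) * (0 + b n m + c m n + 0) := by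
          have e4 := MeasureTheory.integral_add
            (μ := MeasureTheory.volume.restrict (Set.Ioc (0:ℝ) 1)) ((hiA.add hiB).add hiC) hiD
          have e3 := MeasureTheory.integral_add
            (μ := MeasureTheory.volume.restrict (Set.Ioc (0:ℝ) 1)) (hiA.add hiB) hiC
          have e2 := MeasureTheory.integral_add
            (μ := MeasureTheory.volume.restrict (Set.Ioc (0:ℝ) 1)) hiA hiB
          simp only [Pi.add_apply] at e4 e3 e2
          rw [e4, e3, e2, hA, hB, hC, hD]
  have hfinal : (0 : ℂ) = -(n : ℂ) * (0 + b n m + c m n + 0) := by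
    rw [← hsum4, ← intervalIntegral.integral_of_le (zero_le_one)]
    exact hFTC.symm
  have hzero : b n m + c m n = 0 := by
    rcases mul_eq_zero.mp hfinal.symm with h6 | h6
    · exact absurd h6 (by simpa using hnC)
    · linear_combination h6
  linear_combination hzero

end
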